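/- Let G be a group and n ≥ 2. For g ∈ G, let α_g be the G-automorphism of G ∗ F_n fixing x_2, …, x_n and sending x_1 to x_1 · inl(g), and let β_g be the G-automorphism fixing x_2, …, x_n and sending x_1 to x_1 · (x_2⁻¹ · inl(g) · x_2). Then the homomorphism G ∗ G → Aut_G(G ∗ F_n) induced by g ↦ α_g on the first free factor and g ↦ β_g on the second free factor is injective; in particular the free product G ∗ G embeds in Aut_G(G ∗ F_n). -/

import Mathlib

/-- The subgroup `Aut_G(G ∗ F_n)` of `G`-automorphisms of `G ∗ F_n`, i.e.
automorphisms restricting to the identity on (the canonical copy of) `G`. -/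
def gAut (G : Type*) [Group G] (n : ℕ) :
    Subgroup (MulAut (Monoid.Coprod G (FreeGroup (Fin n)))) where
  carrier := {α | ∀ g : G, α (Monoid.Coprod.inl g) = Monoid.Coprod.inl g}
  one_mem' := fun _ => rfl
  mul_mem' := fun {a b} ha hb g => by
    simp only [Set.mem_setOf_eq] at ha hb
    show a (b _) = _
    rw [hb g, ha g]
  inv_mem' := fun {a} ha g => by
    simp only [Set.mem_setOf_eq] at ha
    show a⁻¹ _ = _
    conv_lhs => rw [← ha g]
    exact a.symm_apply_apply _

/-- The generator `x_i` of the free factor `F_n` inside `G ∗ F_n`. -/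
def xgen (G : Type*) [Group G] (n : ℕ) (i : Fin n) :
    Monoid.Coprod G (FreeGroup (Fin n)) :=
  Monoid.Coprod.inr (FreeGroup.of i)

namespace FPE

open Monoid Monoid.Coprod

variable {G : Type*} [Group G] {n : ℕ}

/-- Endomorphism of `G ∗ F_n` fixing `G` and `x_i` for `i ≠ i0`, sending `x_{i0} ↦ x_{i0} * k`. -/
def endo (i0 : Fin n) (k : Monoid.Coprod G (FreeGroup (Fin n))) :
    Monoid.Coprod G (FreeGroup (Fin n)) →* Monoid.Coprod G (FreeGroup (Fin n)) :=
  Monoid.Coprod.lift Monoid.Coprod.inl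
    (FreeGroup.lift fun i => if i = i0 then xgen G n i0 * k else xgen G n i)

lemma endo_inl (i0 : Fin n) (k : Monoid.Coprod G (FreeGroup (Fin n))) (g : G) :
    endo i0 k (Monoid.Coprod.inl g) = Monoid.Coprod.inl g :=
  lift_apply_inl _ _ _

lemma endo_x (i0 : Fin n) (k : Monoid.Coprod G (FreeGroup (Fin n))) (i : Fin n) :
    endo i0 k (xgen G n i) = if i = i0 then xgen G n i0 * k else xgen G n i := by
  show Monoid.Coprod.lift _ _ (Monoid.Coprod.inr (FreeGroup.of i)) = _
  rw [lift_apply_inr, FreeGroup.lift_apply_of]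

lemma endo_one (i0 : Fin n) :
    endo (G := G) i0 1 = MonoidHom.id _ := by
  apply Monoid.Coprod.hom_ext
  · ext g; simp [endo_inl]
  · ext i
    show endo i0 1 (xgen G n i) = xgen G n i
    rw [endo_x]
    split <;> simp_all

lemma endo_comp (i0 : Fin n) (k k' : Monoid.Coprod G (FreeGroup (Fin n)))
    (h : endo i0 k k' = k') :
    (endo i0 k).comp (endo i0 k') = endo i0 (k * k') := by
  apply Monoid.Coprod.hom_ext
  · ext g; simp [endo_inl]
  · ext i
    show endo i0 k (endo i0 k' (xgen G n i)) = endo i0 (k * k') (xgen G n i)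
    rw [endo_x, endo_x]
    split
    · rw [map_mul, endo_x, if_pos rfl, h, mul_assoc]
    · rw [endo_x]; simp_all

/-- `G`-automorphisms built from `endo`. -/
def autHom (i0 : Fin n) (c : G →* Monoid.Coprod G (FreeGroup (Fin n)))
    (hfix : ∀ g h : G, endo i0 (c g) (c h) = c h) :
    G →* MulAut (Monoid.Coprod G (FreeGroup (Fin n))) where
  toFun g :=
    { toFun := endo i0 (c g)
      invFun := endo i0 (c g⁻¹)
      left_inv := fun x => by
        have h1 := endo_comp i0 (c g⁻¹) (c g) (hfix g⁻¹ g)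
        have h2 : c g⁻¹ * c g = 1 := by rw [← map_mul, inv_mul_cancel, map_one]
        have := DFunLike.congr_fun h1 x
        simpa [h2, endo_one] using this
      right_inv := fun x => by
        have h1 := endo_comp i0 (c g) (c g⁻¹) (hfix g g⁻¹)
        have h2 : c g * c g⁻¹ = 1 := by rw [← map_mul, mul_inv_cancel, map_one]
        have := DFunLike.congr_fun h1 x
        simpa [h2, endo_one] using this
      map_mul' := map_mul _ }
  map_one' := by
    ext x
    show endo i0 (c 1) x = x
    rw [map_one, endo_one]; rfl
  map_mul' := fun g h => by
    ext x
    show endo i0 (c (g * h)) x = endo i0 (c g) (endo i0 (c h) x)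
    have h1 := endo_comp i0 (c g) (c h) (hfix g h)
    have := DFunLike.congr_fun h1 x
    rw [map_mul]
    exact this.symm

end FPE

namespace FPE2
open Monoid Monoid.Coprod

variable {G : Type*} [Group G] {n : ℕ}

/-- The swap of `G ∗ G` as a permutation. -/
def tau (G : Type*) [Group G] : Equiv.Perm (Monoid.Coprod G G) where
  toFun := Monoid.Coprod.swap G G
  invFun := Monoid.Coprod.swap G G
  left_inv := fun x => Monoid.Coprod.swap_swap x
  right_inv := fun x => Monoid.Coprod.swap_swap x

/-- left regular representation of `G ∗ G`. -/
def lreg (G : Type*) [Group G] :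
    Monoid.Coprod G G →* Equiv.Perm (Monoid.Coprod G G) :=
  MulAction.toPermHom _ _

lemma lreg_apply (d x : Monoid.Coprod G G) : lreg G d x = d * x := rfl

lemma lreg_injective : Function.Injective (lreg G) := by
  intro a b hab
  have := congrArg (fun p : Equiv.Perm (Monoid.Coprod G G) => p 1) hab
  simpa [lreg_apply] using this

/-- the conjugated copy of `G` in `G ∗ F_n`. -/
def cbeta (h1 : 1 < n) : G →* Monoid.Coprod G (FreeGroup (Fin n)) :=
  (MulAut.conj (xgen G n ⟨1, h1⟩)⁻¹).toMonoidHom.comp Monoid.Coprod.inl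

lemma cbeta_apply (h1 : 1 < n) (g : G) :
    cbeta h1 g = (xgen G n ⟨1, h1⟩)⁻¹ * Monoid.Coprod.inl g * xgen G n ⟨1, h1⟩ := by
  simp [cbeta, MulAut.conj_apply]

/-- The homomorphism `G ∗ G → G ∗ F_n`, `inl g ↦ inl g`, `inr g ↦ x₁⁻¹ (inl g) x₁`. -/
def phi (h1 : 1 < n) : Monoid.Coprod G G →* Monoid.Coprod G (FreeGroup (Fin n)) :=
  Monoid.Coprod.lift Monoid.Coprod.inl (cbeta h1)

/-- The extension of the left regular representation of `G ∗ G` to `G ∗ F_n`. -/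
def arep (h1 : 1 < n) : Monoid.Coprod G (FreeGroup (Fin n)) →* Equiv.Perm (Monoid.Coprod G G) :=
  Monoid.Coprod.lift ((lreg G).comp Monoid.Coprod.inl)
    (FreeGroup.lift fun i => if i = (⟨1, h1⟩ : Fin n) then tau G else 1)

lemma tau_mul_tau : tau G * tau G = 1 := by
  ext x
  exact Monoid.Coprod.swap_swap x

lemma tau_inv : (tau G)⁻¹ = tau G := by
  exact inv_eq_of_mul_eq_one_left tau_mul_tau

lemma arep_comp_phi (h1 : 1 < n) : (arep (G := G) h1).comp (phi h1) = lreg G := by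
  apply Monoid.Coprod.hom_ext
  · rfl
  · apply MonoidHom.ext; intro g
    show arep h1 (phi h1 (Monoid.Coprod.inr g)) = lreg G (Monoid.Coprod.inr g)
    have hx : arep (G := G) h1 (xgen G n ⟨1, h1⟩) = tau G := by
      show Monoid.Coprod.lift _ _ (Monoid.Coprod.inr (FreeGroup.of _)) = _
      rw [lift_apply_inr, FreeGroup.lift_apply_of, if_pos rfl]
    have : phi h1 (Monoid.Coprod.inr g) = cbeta h1 g := lift_apply_inr _ _ _
    rw [this, cbeta_apply, map_mul, map_mul, map_inv, hx]
    have ha : arep (G := G) h1 (Monoid.Coprod.inl g) = lreg G (Monoid.Coprod.inl g) :=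
      lift_apply_inl _ _ _
    rw [ha, tau_inv]
    ext ω
    show tau G (lreg G (Monoid.Coprod.inl g) (tau G ω)) = _
    rw [lreg_apply, lreg_apply]
    show Monoid.Coprod.swap G G (Monoid.Coprod.inl g * Monoid.Coprod.swap G G ω) = _
    rw [map_mul, Monoid.Coprod.swap_inl, Monoid.Coprod.swap_swap]

lemma phi_injective (h1 : 1 < n) : Function.Injective (phi (G := G) h1) := by
  have : Function.Injective ((arep (G := G) h1).comp (phi h1)) := by
    rw [arep_comp_phi]; exact lreg_injective
  exact Function.Injective.of_comp this

end FPE2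

namespace FPE3
open Monoid Monoid.Coprod FPE FPE2

variable {G : Type*} [Group G] {n : ℕ}

lemma hfix_alpha (h0 : 0 < n) :
    ∀ g h : G, endo (n := n) ⟨0, h0⟩ (Monoid.Coprod.inl g) (Monoid.Coprod.inl h) =
      Monoid.Coprod.inl h := fun _ h => endo_inl _ _ h

lemma x1_ne (h0 : 0 < n) (h1 : 1 < n) : (⟨1, h1⟩ : Fin n) ≠ ⟨0, h0⟩ := by
  simp [Fin.ext_iff]

lemma endo_x1 (h0 : 0 < n) (h1 : 1 < n) (k : Monoid.Coprod G (FreeGroup (Fin n))) :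
    endo ⟨0, h0⟩ k (xgen G n ⟨1, h1⟩) = xgen G n ⟨1, h1⟩ := by
  rw [endo_x, if_neg (x1_ne h0 h1)]

lemma endo_cbeta (h0 : 0 < n) (h1 : 1 < n) (k : Monoid.Coprod G (FreeGroup (Fin n))) (h : G) :
    endo ⟨0, h0⟩ k (cbeta h1 h) = cbeta h1 h := by
  rw [cbeta_apply, map_mul, map_mul, map_inv, endo_inl, endo_x1 h0 h1]

lemma hfix_beta (h0 : 0 < n) (h1 : 1 < n) :
    ∀ g h : G, endo ⟨0, h0⟩ (cbeta h1 g) (cbeta h1 h) = cbeta h1 h :=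
  fun g h => endo_cbeta h0 h1 _ h

/-- the `α` homomorphism into `gAut`. -/
def alphaHom (h0 : 0 < n) : G →* gAut G n :=
  MonoidHom.codRestrict (autHom ⟨0, h0⟩ Monoid.Coprod.inl (hfix_alpha h0)) _
    (fun g h => endo_inl ⟨0, h0⟩ (Monoid.Coprod.inl g) h)

/-- the `β` homomorphism into `gAut`. -/
def betaHom (h0 : 0 < n) (h1 : 1 < n) : G →* gAut G n :=
  MonoidHom.codRestrict (autHom ⟨0, h0⟩ (cbeta h1) (hfix_beta h0 h1)) _
    (fun g h => endo_inl ⟨0, h0⟩ (cbeta h1 g) h)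

/-- The induced homomorphism `G ∗ G → Aut_G(G ∗ F_n)`. -/
def fHom (h0 : 0 < n) (h1 : 1 < n) : Monoid.Coprod G G →* gAut G n :=
  Monoid.Coprod.lift (alphaHom h0) (betaHom h0 h1)

lemma fHom_inl_apply (h0 : 0 < n) (h1 : 1 < n) (g : G)
    (x : Monoid.Coprod G (FreeGroup (Fin n))) :
    (fHom h0 h1 (Monoid.Coprod.inl g) :
      MulAut (Monoid.Coprod G (FreeGroup (Fin n)))) x = endo ⟨0, h0⟩ (Monoid.Coprod.inl g) x := by
  have h2 : fHom h0 h1 (Monoid.Coprod.inl g) = alphaHom h0 g := lift_apply_inl _ _ _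
  rw [h2]; rfl

lemma fHom_inr_apply (h0 : 0 < n) (h1 : 1 < n) (g : G)
    (x : Monoid.Coprod G (FreeGroup (Fin n))) :
    (fHom h0 h1 (Monoid.Coprod.inr g) :
      MulAut (Monoid.Coprod G (FreeGroup (Fin n)))) x = endo ⟨0, h0⟩ (cbeta h1 g) x := by
  have h2 : fHom h0 h1 (Monoid.Coprod.inr g) = betaHom h0 h1 g := lift_apply_inr _ _ _
  rw [h2]; rfl

lemma fHom_mul_apply (h0 : 0 < n) (h1 : 1 < n) (u v : Monoid.Coprod G G)
    (x : Monoid.Coprod G (FreeGroup (Fin n))) :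
    (fHom h0 h1 (u * v) : MulAut (Monoid.Coprod G (FreeGroup (Fin n)))) x =
      (fHom h0 h1 u : MulAut _) ((fHom h0 h1 v : MulAut _) x) := by
  rw [map_mul]
  rfl

lemma fHom_fix_x1 (h0 : 0 < n) (h1 : 1 < n) (w : Monoid.Coprod G G) :
    (fHom h0 h1 w : MulAut (Monoid.Coprod G (FreeGroup (Fin n)))) (xgen G n ⟨1, h1⟩) =
      xgen G n ⟨1, h1⟩ := by
  induction w using Monoid.Coprod.induction_on with
  | inl g => rw [fHom_inl_apply, endo_x1]
  | inr g => rw [fHom_inr_apply, endo_x1]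
  | mul x y hx hy => rw [fHom_mul_apply, hy, hx]

lemma fHom_fix_phi (h0 : 0 < n) (h1 : 1 < n) (u : Monoid.Coprod G G) (w : Monoid.Coprod G G) :
    (fHom h0 h1 u : MulAut (Monoid.Coprod G (FreeGroup (Fin n)))) (phi h1 w) = phi h1 w := by
  have key : ((fHom h0 h1 u : MulAut (Monoid.Coprod G (FreeGroup (Fin n)))) :
      Monoid.Coprod G (FreeGroup (Fin n)) →* _).comp (phi h1) = phi h1 := by
    apply Monoid.Coprod.hom_ext
    · apply MonoidHom.ext; intro g
      show (fHom h0 h1 u : MulAut _) (phi h1 (Monoid.Coprod.inl g)) = phi h1 (Monoid.Coprod.inl g)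
      have h2 : phi (G := G) h1 (Monoid.Coprod.inl g) = Monoid.Coprod.inl g := lift_apply_inl _ _ _
      rw [h2]
      exact (fHom h0 h1 u).2 g
    · apply MonoidHom.ext; intro g
      show (fHom h0 h1 u : MulAut _) (phi h1 (Monoid.Coprod.inr g)) = phi h1 (Monoid.Coprod.inr g)
      have h2 : phi (G := G) h1 (Monoid.Coprod.inr g) = cbeta h1 g := lift_apply_inr _ _ _
      rw [h2, cbeta_apply, map_mul, map_mul, map_inv, fHom_fix_x1, (fHom h0 h1 u).2 g]
  exact DFunLike.congr_fun key w

lemma fHom_key (h0 : 0 < n) (h1 : 1 < n) (w : Monoid.Coprod G G) :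
    (fHom h0 h1 w : MulAut (Monoid.Coprod G (FreeGroup (Fin n)))) (xgen G n ⟨0, h0⟩) =
      xgen G n ⟨0, h0⟩ * phi h1 w := by
  induction w using Monoid.Coprod.induction_on with
  | inl g =>
    rw [fHom_inl_apply, endo_x, if_pos rfl]
    congr 1
  | inr g =>
    rw [fHom_inr_apply, endo_x, if_pos rfl]
    congr 1
  | mul x y hx hy =>
    rw [fHom_mul_apply, hy, map_mul, hx, map_mul, mul_assoc, fHom_fix_phi]

lemma fHom_injective (h0 : 0 < n) (h1 : 1 < n) :
    Function.Injective (fHom (G := G) h0 h1) := by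
  rw [injective_iff_map_eq_one]
  intro w hw
  have hk := fHom_key h0 h1 w
  rw [hw] at hk
  have : xgen G n ⟨0, h0⟩ = xgen G n ⟨0, h0⟩ * phi h1 w := hk
  have hphi : phi (G := G) h1 w = 1 := by
    have := (left_eq_mul).mp this
    exact this
  exact (injective_iff_map_eq_one (phi h1)).mp (phi_injective h1) w hphi

end FPE3

/-- For `n ≥ 2`, the free product `G ∗ G` embeds in `Aut_G(G ∗ F_n)`: the
homomorphism induced by sending `g` in the first free factor to the
`G`-automorphism `α_g` fixing `x_2, …, x_n` with `x_1 ↦ x_1 · inl(g)`, and `g` in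
the second free factor to the `G`-automorphism `β_g` fixing `x_2, …, x_n` with
`x_1 ↦ x_1 · (x_2⁻¹ · inl(g) · x_2)`, is injective. -/
theorem free_product_embedding (G : Type*) [Group G] (n : ℕ) (hn : 2 ≤ n) :
    have h0 : 0 < n := by omega
    have h1 : 1 < n := by omega
    ∃ f : Monoid.Coprod G G →* gAut G n, Function.Injective f ∧
      (∀ g : G,
        ((f (Monoid.Coprod.inl g) : MulAut (Monoid.Coprod G (FreeGroup (Fin n))))
            (xgen G n ⟨0, h0⟩) = xgen G n ⟨0, h0⟩ * Monoid.Coprod.inl g) ∧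
        ∀ i : Fin n, i ≠ ⟨0, h0⟩ →
          (f (Monoid.Coprod.inl g) : MulAut (Monoid.Coprod G (FreeGroup (Fin n))))
            (xgen G n i) = xgen G n i) ∧
      (∀ g : G,
        ((f (Monoid.Coprod.inr g) : MulAut (Monoid.Coprod G (FreeGroup (Fin n))))
            (xgen G n ⟨0, h0⟩) =
          xgen G n ⟨0, h0⟩ *
            ((xgen G n ⟨1, h1⟩)⁻¹ * Monoid.Coprod.inl g * xgen G n ⟨1, h1⟩)) ∧
        ∀ i : Fin n, i ≠ ⟨0, h0⟩ →
          (f (Monoid.Coprod.inr g) : MulAut (Monoid.Coprod G (FreeGroup (Fin n))))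
            (xgen G n i) = xgen G n i) := by
  have h0 : 0 < n := by omega
  have h1 : 1 < n := by omega
  refine ⟨FPE3.fHom h0 h1, FPE3.fHom_injective h0 h1, ?_, ?_⟩
  · intro g
    constructor
    · rw [FPE3.fHom_inl_apply, FPE.endo_x, if_pos rfl]
    · intro i hi
      rw [FPE3.fHom_inl_apply, FPE.endo_x, if_neg hi]
  · intro g
    constructor
    · rw [FPE3.fHom_inr_apply, FPE.endo_x, if_pos rfl, FPE2.cbeta_apply]
    · intro i hi
      rw [FPE3.fHom_inr_apply, FPE.endo_x, if_neg hi]
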